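/- Let a locally compact abelian group G act via α on a Hausdorff uniform space (X, 𝒰) with 𝒰 G-invariant, and fix x ∈ X. Then: (1) the operation ⊕ on the orbit O(x) = {α(t,x) : t ∈ G} given by α(t,x) ⊕ α(s,x) := α(s+t, x) is well-defined, i.e. if α(t,x) = α(t',x) and α(s,x) = α(s',x) then α(t+s, x) = α(t'+s', x), and (O(x), ⊕) is an abelian group with identity x = α(0,x) and inverse of α(t,x) equal to α(−t,x); (2) ⊕ is uniformly continuous, i.e. for every U ∈ 𝒰 there exists V ∈ 𝒰 such that whenever (α(s₁,x), α(s₂,x)) ∈ V and (α(t₁,x), α(t₂,x)) ∈ V one has (α(s₁+t₁, x), α(s₂+t₂, x)) ∈ U; (3) inversion is uniformly continuous, i.e. for every U ∈ 𝒰 there exists V ∈ 𝒰 such that (α(t,x), α(s,x)) ∈ V implies (α(−t,x), α(−s,x)) ∈ U. -/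

import Mathlib

open Uniformity

/-- Let a locally compact abelian group `G` act via `α` on a Hausdorff uniform
space `(X, 𝒰)` with `𝒰` `G`-invariant, and fix `x ∈ X`. Then the operation
`α t x ⊕ α s x := α (s + t) x` on the orbit is well defined and turns the orbit into an abelian
group with identity `x = α 0 x` and inverse `α (-t) x`, and both the addition and the inversion
are uniformly continuous. -/
theorem stmt8 {G X : Type*}
    [AddCommGroup G] [TopologicalSpace G] [IsTopologicalAddGroup G]
    [LocallyCompactSpace G] [T2Space G]
    [UniformSpace X] [T2Space X]
    (α : G → X → X)
    (hzero : ∀ x, α 0 x = x)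
    (hadd : ∀ s t x, α s (α t x) = α (s + t) x)
    (hinv : ∀ U ∈ 𝓤 X, ∃ U' ∈ 𝓤 X, ∀ (t : G), ∀ p : X × X, p ∈ U' →
      (α t p.1, α t p.2) ∈ U)
    (x : X) :
    -- (1) `⊕` is well defined ...
    (∀ t t' s s' : G, α t x = α t' x → α s x = α s' x → α (t + s) x = α (t' + s') x)
    -- ... and `(O(x), ⊕)` is an abelian group:
    ∧ (∀ t s r : G, α ((t + s) + r) x = α (t + (s + r)) x)        -- associativity
    ∧ (∀ t s : G, α (t + s) x = α (s + t) x)                      -- commutativity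
    ∧ (α 0 x = x)                                                 -- identity element is `x`
    ∧ (∀ t : G, α (t + 0) x = α t x)                              -- `x` is neutral
    ∧ (∀ t : G, α (t + -t) x = α 0 x)                             -- inverse of `α t x` is `α (-t) x`
    -- (2) `⊕` is uniformly continuous:
    ∧ (∀ U ∈ 𝓤 X, ∃ V ∈ 𝓤 X, ∀ s₁ s₂ t₁ t₂ : G,
        (α s₁ x, α s₂ x) ∈ V → (α t₁ x, α t₂ x) ∈ V →
          (α (s₁ + t₁) x, α (s₂ + t₂) x) ∈ U)
    -- (3) inversion is uniformly continuous:
    ∧ (∀ U ∈ 𝓤 X, ∃ V ∈ 𝓤 X, ∀ t s : G,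
        (α t x, α s x) ∈ V → (α (-t) x, α (-s) x) ∈ U) := by
  refine ⟨?_, ?_, ?_, hzero x, ?_, ?_, ?_, ?_⟩
  · intro t t' s s' ht hs
    calc α (t + s) x = α t (α s x) := (hadd t s x).symm
      _ = α t (α s' x) := by rw [hs]
      _ = α (t + s') x := hadd t s' x
      _ = α (s' + t) x := by rw [add_comm]
      _ = α s' (α t x) := (hadd s' t x).symm
      _ = α s' (α t' x) := by rw [ht]
      _ = α (s' + t') x := hadd s' t' x
      _ = α (t' + s') x := by rw [add_comm]
  · intro t s r; rw [add_assoc]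
  · intro t s; rw [add_comm]
  · intro t; rw [add_zero]
  · intro t; rw [add_neg_cancel]
  · intro U hU
    obtain ⟨W, hW, hWU⟩ := comp_mem_uniformity_sets hU
    obtain ⟨V, hV, hVW⟩ := hinv W hW
    refine ⟨V, hV, fun s₁ s₂ t₁ t₂ hs ht => ?_⟩
    have h1 : (α (s₁ + t₁) x, α (s₂ + t₁) x) ∈ W := by
      have := hVW t₁ _ hs
      simpa only [hadd, add_comm] using this
    have h2 : (α (s₂ + t₁) x, α (s₂ + t₂) x) ∈ W := by
      have := hVW s₂ _ ht
      simpa only [hadd, add_comm] using this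
    exact hWU (SetRel.mem_comp.2 ⟨_, h1, h2⟩)
  · intro U hU
    obtain ⟨V, hV, hVU⟩ := hinv U hU
    refine ⟨Prod.swap ⁻¹' V, tendsto_swap_uniformity hV, fun t s h => ?_⟩
    have := hVU (-t - s) (α s x, α t x) h
    simp only [hadd] at this
    have e1 : -t - s + s = -t := by abel
    have e2 : -t - s + t = -s := by abel
    rwa [e1, e2] at this
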